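/- Let γ > 0 and let a1, a2, a3 be nonnegative real numbers which are pairwise distinct (a1 ≠ a2, a1 ≠ a3, a2 ≠ a3). Then the four eigenvalues 0, −2γ(a1+a2), −2γ(a1+a3), −2γ(a2+a3) of the generator L = γ( a1 · σ1⊗σ1 + a2 · σ2ᵀ⊗σ2 + a3 · σ3⊗σ3 − (a1+a2+a3) · I₄ ) are pairwise distinct, and consequently for every λ ∈ ℂ the kernel of L − λ·I₄ has dimension at most 1 (the index of cyclicity of L equals 1). -/

import Mathlib

open Matrix Complex Kronecker

noncomputable section

/-- The Pauli matrices. -/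
def pauli1 : Matrix (Fin 2) (Fin 2) ℂ := !![0, 1; 1, 0]
def pauli2 : Matrix (Fin 2) (Fin 2) ℂ := !![0, -I; I, 0]
def pauli3 : Matrix (Fin 2) (Fin 2) ℂ := !![1, 0; 0, -1]

/-- The generator of evolution
`L = γ( a1 σ1⊗σ1 + a2 σ2ᵀ⊗σ2 + a3 σ3⊗σ3 − (a1+a2+a3) I₄ )`. -/
def gen2 (γ a1 a2 a3 : ℝ) : Matrix (Fin 2 × Fin 2) (Fin 2 × Fin 2) ℂ :=
  (γ : ℂ) • ((a1 : ℂ) • (pauli1 ⊗ₖ pauli1) + (a2 : ℂ) • (pauli2ᵀ ⊗ₖ pauli2)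
    + (a3 : ℂ) • (pauli3 ⊗ₖ pauli3)
    - ((a1 + a2 + a3 : ℝ) : ℂ) • (1 : Matrix (Fin 2 × Fin 2) (Fin 2 × Fin 2) ℂ))

/-- Matrix of eigenvectors of the generator. -/
def Pmat : Matrix (Fin 2 × Fin 2) (Fin 2 × Fin 2) ℂ :=
  Matrix.of fun p q =>
    ![![![![1,1],![0,0]], ![![0,0],![1,1]]],
      ![![![0,0],![1,-1]], ![![1,-1],![0,0]]]] p.1 p.2 q.1 q.2

/-- Inverse of `Pmat`. -/
def Qmat : Matrix (Fin 2 × Fin 2) (Fin 2 × Fin 2) ℂ := (1/2 : ℂ) • Pmatᵀ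

/-- Eigenvalues of the generator. -/
def dvec (γ a1 a2 a3 : ℝ) : Fin 2 × Fin 2 → ℂ :=
  fun p => ![![(0:ℂ), (-(2*γ*(a1+a2)) : ℝ)],
             ![(-(2*γ*(a2+a3)) : ℝ), (-(2*γ*(a1+a3)) : ℝ)]] p.1 p.2

lemma PQ : Pmat * Qmat = 1 := by
  ext ⟨i,j⟩ ⟨k,l⟩
  fin_cases i <;> fin_cases j <;> fin_cases k <;> fin_cases l <;>
    simp [Pmat, Qmat, Matrix.mul_apply, Fintype.sum_prod_type, Fin.sum_univ_two,
      Matrix.one_apply, Prod.ext_iff] <;> norm_num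

lemma QP : Qmat * Pmat = 1 := by
  ext ⟨i,j⟩ ⟨k,l⟩
  fin_cases i <;> fin_cases j <;> fin_cases k <;> fin_cases l <;>
    simp [Pmat, Qmat, Matrix.mul_apply, Fintype.sum_prod_type, Fin.sum_univ_two,
      Matrix.one_apply, Prod.ext_iff] <;> norm_num

set_option maxHeartbeats 2000000 in
lemma LP (γ a1 a2 a3 : ℝ) :
    gen2 γ a1 a2 a3 * Pmat = Pmat * Matrix.diagonal (dvec γ a1 a2 a3) := by
  ext ⟨i,j⟩ ⟨k,l⟩
  fin_cases i <;> fin_cases j <;> fin_cases k <;> fin_cases l <;>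
    · simp [gen2, Pmat, dvec, pauli1, pauli2, pauli3, Matrix.mul_apply,
        Fintype.sum_prod_type, Fin.sum_univ_two, Matrix.diagonal_apply, Prod.ext_iff,
        Matrix.one_apply, Matrix.transpose_apply, Matrix.vecHead, Matrix.vecTail,
        Complex.I_mul_I]
      try ring

lemma detP_isUnit : IsUnit Pmat.det ∧ IsUnit Qmat.det := by
  have h : Pmat.det * Qmat.det = 1 := by rw [← Matrix.det_mul, PQ, Matrix.det_one]
  exact ⟨IsUnit.of_mul_eq_one _ h, IsUnit.of_mul_eq_one _ (by rwa [mul_comm] at h)⟩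

theorem gen2_index_of_cyclicity_one (γ a1 a2 a3 : ℝ) (hγ : 0 < γ)
    (h1 : 0 ≤ a1) (h2 : 0 ≤ a2) (h3 : 0 ≤ a3)
    (h12 : a1 ≠ a2) (h13 : a1 ≠ a3) (h23 : a2 ≠ a3) :
    List.Pairwise (· ≠ ·)
      [(0 : ℂ), ((-(2 * γ * (a1 + a2)) : ℝ) : ℂ), ((-(2 * γ * (a1 + a3)) : ℝ) : ℂ),
        ((-(2 * γ * (a2 + a3)) : ℝ) : ℂ)] ∧
    ∀ lam : ℂ,
      Module.finrank ℂ
        (LinearMap.ker (gen2 γ a1 a2 a3 - lam • 1).mulVecLin) ≤ 1 := by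
  -- positivity of pairwise sums
  have p12 : 0 < a1 + a2 := by
    rcases h1.lt_or_eq with h | h
    · linarith
    · rcases h2.lt_or_eq with h' | h'
      · linarith
      · exact absurd (by rw [← h, ← h']) h12
  have p13 : 0 < a1 + a3 := by
    rcases h1.lt_or_eq with h | h
    · linarith
    · rcases h3.lt_or_eq with h' | h'
      · linarith
      · exact absurd (by rw [← h, ← h']) h13
  have p23 : 0 < a2 + a3 := by
    rcases h2.lt_or_eq with h | h
    · linarith
    · rcases h3.lt_or_eq with h' | h'
      · linarith
      · exact absurd (by rw [← h, ← h']) h23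
  -- real distinctness of eigenvalues
  have rA : (0:ℝ) ≠ -(2*γ*(a1+a2)) := by nlinarith
  have rB : (0:ℝ) ≠ -(2*γ*(a1+a3)) := by nlinarith
  have rC : (0:ℝ) ≠ -(2*γ*(a2+a3)) := by nlinarith
  have rAB : -(2*γ*(a1+a2)) ≠ -(2*γ*(a1+a3)) := by
    intro h
    exact h23 (mul_left_cancel₀ hγ.ne' (by linear_combination (-1/2 : ℝ) * h))
  have rAC : -(2*γ*(a1+a2)) ≠ -(2*γ*(a2+a3)) := by
    intro h
    exact h13 (mul_left_cancel₀ hγ.ne' (by linear_combination (-1/2 : ℝ) * h))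
  have rBC : -(2*γ*(a1+a3)) ≠ -(2*γ*(a2+a3)) := by
    intro h
    exact h12 (mul_left_cancel₀ hγ.ne' (by linear_combination (-1/2 : ℝ) * h))
  -- complex versions
  have cA : (0:ℂ) ≠ ((-(2*γ*(a1+a2)) : ℝ) : ℂ) := by exact_mod_cast rA
  have cB : (0:ℂ) ≠ ((-(2*γ*(a1+a3)) : ℝ) : ℂ) := by exact_mod_cast rB
  have cC : (0:ℂ) ≠ ((-(2*γ*(a2+a3)) : ℝ) : ℂ) := by exact_mod_cast rC
  have cAB : ((-(2*γ*(a1+a2)) : ℝ) : ℂ) ≠ ((-(2*γ*(a1+a3)) : ℝ) : ℂ) := by exact_mod_cast rAB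
  have cAC : ((-(2*γ*(a1+a2)) : ℝ) : ℂ) ≠ ((-(2*γ*(a2+a3)) : ℝ) : ℂ) := by exact_mod_cast rAC
  have cBC : ((-(2*γ*(a1+a3)) : ℝ) : ℂ) ≠ ((-(2*γ*(a2+a3)) : ℝ) : ℂ) := by exact_mod_cast rBC
  constructor
  · constructor
    · intro b hb
      simp only [List.mem_cons, List.not_mem_nil, or_false] at hb
      rcases hb with rfl | rfl | rfl
      exacts [cA, cB, cC]
    constructor
    · intro b hb
      simp only [List.mem_cons, List.not_mem_nil, or_false] at hb
      rcases hb with rfl | rfl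
      exacts [cAB, cAC]
    constructor
    · intro b hb
      simp only [List.mem_cons, List.not_mem_nil, or_false] at hb
      subst hb
      exact cBC
    exact List.pairwise_singleton _ _
  · -- kernel dimension bound
    have hinj : Function.Injective (dvec γ a1 a2 a3) := by
      intro p q h
      obtain ⟨p1, p2⟩ := p
      obtain ⟨q1, q2⟩ := q
      fin_cases p1 <;> fin_cases p2 <;> fin_cases q1 <;> fin_cases q2 <;>
        simp only [dvec, Matrix.cons_val_zero, Matrix.cons_val_one, Matrix.head_cons] at h <;>
        first
          | rfl
          | (exact absurd h cA) | (exact absurd h.symm cA)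
          | (exact absurd h cB) | (exact absurd h.symm cB)
          | (exact absurd h cC) | (exact absurd h.symm cC)
          | (exact absurd h cAB) | (exact absurd h.symm cAB)
          | (exact absurd h cAC) | (exact absurd h.symm cAC)
          | (exact absurd h cBC) | (exact absurd h.symm cBC)
    intro lam
    set w : Fin 2 × Fin 2 → ℂ := fun i => dvec γ a1 a2 a3 i - lam with hw
    -- decomposition of L - lam • 1
    have hL : gen2 γ a1 a2 a3 = Pmat * Matrix.diagonal (dvec γ a1 a2 a3) * Qmat := by
      calc gen2 γ a1 a2 a3 = gen2 γ a1 a2 a3 * (Pmat * Qmat) := by rw [PQ, mul_one]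
        _ = (gen2 γ a1 a2 a3 * Pmat) * Qmat := by rw [mul_assoc]
        _ = Pmat * Matrix.diagonal (dvec γ a1 a2 a3) * Qmat := by rw [LP]
    have hId : lam • (1 : Matrix (Fin 2 × Fin 2) (Fin 2 × Fin 2) ℂ)
        = Pmat * (lam • (1 : Matrix (Fin 2 × Fin 2) (Fin 2 × Fin 2) ℂ)) * Qmat := by
      rw [Matrix.mul_smul, mul_one, Matrix.smul_mul, PQ]
    have hM : gen2 γ a1 a2 a3 - lam • 1 = Pmat * Matrix.diagonal w * Qmat := by
      rw [hL, hId, ← Matrix.sub_mul, ← Matrix.mul_sub]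
      congr 1
      congr 1
      ext i j
      by_cases h : i = j <;>
        simp [Matrix.diagonal_apply, h, Matrix.one_apply, hw]
    -- rank computation
    have hrank : (gen2 γ a1 a2 a3 - lam • 1).rank = (Matrix.diagonal w).rank := by
      rw [hM, Matrix.rank_mul_eq_left_of_isUnit_det _ _ detP_isUnit.2,
        Matrix.rank_mul_eq_right_of_isUnit_det _ _ detP_isUnit.1]
    have hcard0 : Fintype.card {i : Fin 2 × Fin 2 // w i = 0} ≤ 1 := by
      refine Fintype.card_le_one_iff.mpr ?_
      rintro ⟨i, hi⟩ ⟨j, hj⟩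
      rw [hw] at hi hj
      have : dvec γ a1 a2 a3 i = dvec γ a1 a2 a3 j := by
        rw [sub_eq_zero] at hi hj; rw [hi, hj]
      exact Subtype.ext (hinj this)
    have hcard : 3 ≤ Fintype.card {i : Fin 2 × Fin 2 // w i ≠ 0} := by
      have h4 : Fintype.card {i : Fin 2 × Fin 2 // w i ≠ 0}
          = Fintype.card (Fin 2 × Fin 2) - Fintype.card {i : Fin 2 × Fin 2 // w i = 0} :=
        Fintype.card_subtype_compl _
      simp only [Fintype.card_prod, Fintype.card_fin] at h4
      omega
    have hrank3 : 3 ≤ (gen2 γ a1 a2 a3 - lam • 1).rank := by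
      rw [hrank, Matrix.rank_diagonal]
      exact hcard
    -- rank-nullity
    have hrn := LinearMap.finrank_range_add_finrank_ker
      ((gen2 γ a1 a2 a3 - lam • 1).mulVecLin)
    have hdom : Module.finrank ℂ (Fin 2 × Fin 2 → ℂ) = 4 := by
      simp [Module.finrank_fintype_fun_eq_card]
    have hrr : (gen2 γ a1 a2 a3 - lam • 1).rank
        = Module.finrank ℂ (LinearMap.range (gen2 γ a1 a2 a3 - lam • 1).mulVecLin) := rfl
    omega

end
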